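/- arXiv:1811.08776 — 9 statements merged into one kernel-verified Lean document; each statement's English description precedes it below -/
import Mathlib

section
/- Let R be a real symmetric n×n matrix having 1 as an eigenvalue and having 0 as an eigenvalue with multiplicity at least m. Then Σ|λ_i| ≤ √((n−1−m)(tr(R²)−1)) + 1. -/
open scoped Classical

lemma trace_sq_eq_sum_sq {n : ℕ} (R : Matrix (Fin n) (Fin n) ℝ) (hR : R.IsHermitian) :
    (R * R).trace = ∑ i, hR.eigenvalues i ^ 2 := by
  set U := (hR.eigenvectorUnitary : Matrix (Fin n) (Fin n) ℝ) with hUdef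
  set D : Matrix (Fin n) (Fin n) ℝ := Matrix.diagonal (RCLike.ofReal ∘ hR.eigenvalues) with hDdef
  have hU : star U * U = 1 := Matrix.mem_unitaryGroup_iff'.mp hR.eigenvectorUnitary.2
  have hspec : R = U * D * star U := hR.spectral_theorem
  have key : R * R = U * (D * D) * star U := by
    rw [hspec]
    have : (U * D * star U) * (U * D * star U) = U * (D * (star U * U) * D) * star U := by
      simp only [mul_assoc]
    rw [this, hU, mul_one]
  rw [key, Matrix.trace_mul_cycle, ← mul_assoc, hU, one_mul]
  simp [hDdef, Matrix.diagonal_mul_diagonal, Matrix.trace_diagonal, sq]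

theorem energy_bound_one_eigenvalue_and_nullity {n : ℕ}
    (R : Matrix (Fin n) (Fin n) ℝ) (hR : R.IsHermitian) (m : ℕ)
    (h1 : ∃ i, hR.eigenvalues i = 1)
    (h0 : m ≤ (Finset.univ.filter fun i => hR.eigenvalues i = 0).card) :
    ∑ i, |hR.eigenvalues i| ≤
      Real.sqrt (((n : ℝ) - 1 - m) * ((R * R).trace - 1)) + 1 := by
  obtain ⟨i₀, hi₀⟩ := h1
  set lam := hR.eigenvalues with hlam
  set Z := Finset.univ.filter (fun i => lam i = 0) with hZ
  have hi₀Z : i₀ ∉ Z := by simp [hZ, hi₀]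
  set S := Finset.univ \ insert i₀ Z with hS
  have hdisj : Disjoint (insert i₀ Z) S := Finset.disjoint_sdiff
  have hsplit : (Finset.univ : Finset (Fin n)) = insert i₀ Z ∪ S :=
    (Finset.union_sdiff_of_subset (Finset.subset_univ _)).symm
  have hZ0 : ∀ f : ℝ → ℝ, f 0 = 0 → ∑ i ∈ Z, f (lam i) = 0 := by
    intro f hf
    refine Finset.sum_eq_zero fun i hi => ?_
    rw [hZ, Finset.mem_filter] at hi
    rw [hi.2, hf]
  have hsum : ∀ f : ℝ → ℝ, f 0 = 0 →
      ∑ i, f (lam i) = f 1 + ∑ i ∈ S, f (lam i) := by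
    intro f hf
    rw [hsplit, Finset.sum_union hdisj, Finset.sum_insert hi₀Z, hZ0 f hf, hi₀, add_zero]
  have hcardn : S.card + Z.card + 1 = n := by
    have h1' : S.card + (insert i₀ Z).card = n := by
      rw [hS]
      rw [Finset.card_sdiff_add_card_eq_card (Finset.subset_univ _), Finset.card_univ,
        Fintype.card_fin]
    rw [Finset.card_insert_of_notMem hi₀Z] at h1'
    omega
  have hcard : (S.card : ℝ) ≤ (n : ℝ) - 1 - m := by
    have hm : (m : ℝ) ≤ Z.card := by exact_mod_cast h0
    have hn : (S.card : ℝ) + Z.card + 1 = n := by exact_mod_cast hcardn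
    linarith
  have htr : (R * R).trace = ∑ i, lam i ^ 2 := trace_sq_eq_sum_sq R hR
  have habs : ∑ i, |lam i| = 1 + ∑ i ∈ S, |lam i| := by
    simpa using hsum (fun x => |x|) abs_zero
  have hsq : (R * R).trace = 1 + ∑ i ∈ S, lam i ^ 2 := by
    have h := hsum (fun x => x ^ 2) (by norm_num)
    rw [htr, h]; norm_num
  have hSnonneg : (0:ℝ) ≤ ∑ i ∈ S, |lam i| := Finset.sum_nonneg fun i _ => abs_nonneg _
  have hsq_nonneg : (0:ℝ) ≤ ∑ i ∈ S, lam i ^ 2 := Finset.sum_nonneg fun i _ => sq_nonneg _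
  have hCS : (∑ i ∈ S, |lam i|) ^ 2 ≤ (S.card : ℝ) * ∑ i ∈ S, lam i ^ 2 := by
    have := sq_sum_le_card_mul_sum_sq (s := S) (f := fun i => |lam i|)
    simpa [sq_abs] using this
  have hmain : ∑ i ∈ S, |lam i| ≤
      Real.sqrt (((n : ℝ) - 1 - m) * ((R * R).trace - 1)) := by
    rw [← Real.sqrt_sq hSnonneg]
    apply Real.sqrt_le_sqrt
    calc (∑ i ∈ S, |lam i|) ^ 2 ≤ (S.card : ℝ) * ∑ i ∈ S, lam i ^ 2 := hCS
      _ ≤ ((n : ℝ) - 1 - m) * ((R * R).trace - 1) := by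
          apply mul_le_mul hcard (by linarith [hsq]) hsq_nonneg
          exact le_trans (Nat.cast_nonneg _) hcard
  linarith [habs, hmain]
end

section
/- Let R be a real symmetric n×n matrix having both 1 and −1 as eigenvalues, and having 0 as an eigenvalue with multiplicity at least m. Then Σ|λ_i| ≤ √((n−2−m)(tr(R²)−2)) + 2. -/
open scoped Classical

theorem energy_bound_bipartite_eigenvalues_and_nullity {n : ℕ}
    (R : Matrix (Fin n) (Fin n) ℝ) (hR : R.IsHermitian) (m : ℕ)
    (h1 : ∃ i, hR.eigenvalues i = 1)
    (hneg1 : ∃ i, hR.eigenvalues i = -1)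
    (h0 : m ≤ (Finset.univ.filter fun i => hR.eigenvalues i = 0).card) :
    ∑ i, |hR.eigenvalues i| ≤
      Real.sqrt (((n : ℝ) - 2 - m) * ((R * R).trace - 2)) + 2 := by
  obtain ⟨ip, hip⟩ := h1
  obtain ⟨im, him⟩ := hneg1
  set f := hR.eigenvalues with hf
  have hne : im ≠ ip := by
    intro h; rw [h, hip] at him; norm_num at him
  set Z := Finset.univ.filter fun i => f i = 0 with hZ
  set s := (Finset.univ.erase ip).erase im with hs
  set T := s.filter (fun i => f i ≠ 0) with hT
  have himmem : im ∈ Finset.univ.erase ip := Finset.mem_erase.mpr ⟨hne, Finset.mem_univ _⟩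
  have hZs : Z ⊆ s := by
    intro i hi
    rw [hZ, Finset.mem_filter] at hi
    refine Finset.mem_erase.mpr ⟨?_, Finset.mem_erase.mpr ⟨?_, Finset.mem_univ _⟩⟩
    · intro h; have h2 := hi.2; rw [h, him] at h2; norm_num at h2
    · intro h; have h2 := hi.2; rw [h, hip] at h2; norm_num at h2
  have hdisj : Disjoint T Z := by
    rw [Finset.disjoint_left]
    intro i hiT hiZ
    rw [hT, Finset.mem_filter] at hiT
    rw [hZ, Finset.mem_filter] at hiZ
    exact hiT.2 hiZ.2
  have hscard : s.card = n - 2 := by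
    rw [hs, Finset.card_erase_of_mem himmem, Finset.card_erase_of_mem (Finset.mem_univ _)]
    simp only [Finset.card_univ, Fintype.card_fin]; omega
  have h2n : 2 ≤ n := by
    have : 1 < Fintype.card (Fin n) := Fintype.one_lt_card_iff_nontrivial.mpr ⟨⟨im, ip, hne⟩⟩
    simp at this; omega
  have hkey : T.card + Z.card + 2 ≤ n := by
    have h1 : T.card + Z.card = (T ∪ Z).card := (Finset.card_union_of_disjoint hdisj).symm
    have h2 : (T ∪ Z).card ≤ s.card := Finset.card_le_card
      (Finset.union_subset (Finset.filter_subset _ _) hZs)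
    omega
  have hTcard : (T.card : ℝ) ≤ (n : ℝ) - 2 - m := by
    have : (T.card : ℝ) + m + 2 ≤ n := by
      have : T.card + m + 2 ≤ n := by omega
      exact_mod_cast this
    linarith
  have hip1 : |f ip| = 1 := by rw [hip]; norm_num
  have him1 : |f im| = 1 := by rw [him]; norm_num
  -- sum splits
  have esum : ∑ i, |f i| = (∑ i ∈ T, |f i|) + 2 := by
    have e1 : ∑ i ∈ s, |f i| + |f im| = ∑ i ∈ Finset.univ.erase ip, |f i| :=
      Finset.sum_erase_add _ _ himmem
    have e2 : ∑ i ∈ Finset.univ.erase ip, |f i| + |f ip| = ∑ i, |f i| :=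
      Finset.sum_erase_add _ _ (Finset.mem_univ _)
    have e3 : ∑ i ∈ T, |f i| = ∑ i ∈ s, |f i| := by
      apply Finset.sum_filter_of_ne
      intro x _ hx h
      exact hx (by rw [h]; simp)
    rw [e3]
    rw [hip1] at e2; rw [him1] at e1
    linarith
  have esq : ∑ i ∈ T, f i ^ 2 + 2 ≤ (R * R).trace := by
    rw [trace_sq_eq_sum_sq R hR, ← hf]
    have e1 : ∑ i ∈ s, f i ^ 2 + f im ^ 2 = ∑ i ∈ Finset.univ.erase ip, f i ^ 2 :=
      Finset.sum_erase_add _ _ himmem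
    have e2 : ∑ i ∈ Finset.univ.erase ip, f i ^ 2 + f ip ^ 2 = ∑ i, f i ^ 2 :=
      Finset.sum_erase_add _ _ (Finset.mem_univ _)
    have e3 : ∑ i ∈ T, f i ^ 2 ≤ ∑ i ∈ s, f i ^ 2 :=
      Finset.sum_le_sum_of_subset_of_nonneg (Finset.filter_subset _ _)
        (fun i _ _ => sq_nonneg _)
    rw [hip] at e2; rw [him] at e1
    nlinarith
  have hsqnn : (0 : ℝ) ≤ ∑ i ∈ T, f i ^ 2 := Finset.sum_nonneg fun i _ => sq_nonneg _
  have hnm : (0 : ℝ) ≤ (n : ℝ) - 2 - m := le_trans (Nat.cast_nonneg _) hTcard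
  -- Cauchy–Schwarz
  have hcs : (∑ i ∈ T, |f i|) ^ 2 ≤ (T.card : ℝ) * ∑ i ∈ T, f i ^ 2 := by
    have := Finset.sum_mul_sq_le_sq_mul_sq T (fun _ => (1 : ℝ)) (fun i => |f i|)
    simpa [sq_abs] using this
  have hTsum : ∑ i ∈ T, |f i| ≤ Real.sqrt (((n : ℝ) - 2 - m) * ((R * R).trace - 2)) := by
    have h1 : (∑ i ∈ T, |f i|) ^ 2 ≤ ((n : ℝ) - 2 - m) * ((R * R).trace - 2) := by
      calc (∑ i ∈ T, |f i|) ^ 2 ≤ (T.card : ℝ) * ∑ i ∈ T, f i ^ 2 := hcs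
        _ ≤ ((n : ℝ) - 2 - m) * ((R * R).trace - 2) :=
          mul_le_mul hTcard (by linarith) hsqnn hnm
    have h2 : 0 ≤ ∑ i ∈ T, |f i| := Finset.sum_nonneg fun i _ => abs_nonneg _
    calc ∑ i ∈ T, |f i| = Real.sqrt ((∑ i ∈ T, |f i|) ^ 2) := (Real.sqrt_sq h2).symm
      _ ≤ _ := Real.sqrt_le_sqrt h1
  rw [esum]
  linarith
end

section
/- Let G be a connected graph on n ≥ 3 vertices with Randić matrix R, and suppose R_{−1}(G) ≤ 15(n+1)/56 and 1 is an eigenvalue of R. Then the Randić energy satisfies RE(G) ≤ √((n−1−η)·(15n−13)/28) + 1, where η is the nullity of R. -/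
open scoped Classical

noncomputable def randicMatrix {V : Type*} [Fintype V] (G : SimpleGraph V)
    [DecidableRel G.Adj] : Matrix V V ℝ :=
  fun u v =>
    if G.Adj u v then 1 / Real.sqrt ((G.degree u : ℝ) * (G.degree v : ℝ)) else 0

noncomputable def randicIndex {V : Type*} [Fintype V] (G : SimpleGraph V)
    [DecidableRel G.Adj] : ℝ :=
  (1 / 2) * ∑ u, ∑ v, if G.Adj u v then 1 / ((G.degree u : ℝ) * (G.degree v : ℝ)) else 0

lemma trace_sq_eq_sum_eigen {m : Type*} [Fintype m] [DecidableEq m] {A : Matrix m m ℝ}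
    (hA : A.IsHermitian) : (A * A).trace = ∑ i, hA.eigenvalues i ^ 2 := by
  conv_lhs => rw [hA.spectral_theorem]
  simp only [Unitary.conjStarAlgAut_apply]
  set U := (Matrix.IsHermitian.eigenvectorUnitary hA : Matrix m m ℝ) with hU
  have h1 : star U * U = 1 := (Matrix.mem_unitaryGroup_iff').mp (Matrix.IsHermitian.eigenvectorUnitary hA).2
  set D := Matrix.diagonal (RCLike.ofReal ∘ hA.eigenvalues : m → ℝ) with hD
  have h2 : ∀ X : Matrix m m ℝ, star U * (U * X) = X := fun X => by
    rw [← Matrix.mul_assoc, h1, Matrix.one_mul]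
  have : (U * D * star U) * (U * D * star U) = U * (D * D) * star U := by
    simp only [Matrix.mul_assoc]
    rw [h2]
  rw [this, Matrix.trace_mul_cycle, ← Matrix.mul_assoc, h1, Matrix.one_mul, hD,
    Matrix.diagonal_mul_diagonal, Matrix.trace_diagonal]
  simp [sq]

lemma trace_randic_sq {V : Type*} [Fintype V] (G : SimpleGraph V) [DecidableRel G.Adj] :
    (randicMatrix G * randicMatrix G).trace = 2 * randicIndex G := by
  have key : ∀ u v : V, randicMatrix G u v * randicMatrix G v u
      = if G.Adj u v then 1 / ((G.degree u : ℝ) * (G.degree v : ℝ)) else 0 := by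
    intro u v
    unfold randicMatrix
    by_cases h : G.Adj u v
    · have h' : G.Adj v u := h.symm
      simp only [h, h', if_true]
      rw [mul_comm ((G.degree v : ℝ)) ((G.degree u : ℝ)), div_mul_div_comm, one_mul,
        Real.mul_self_sqrt (by positivity)]
    · simp [h, fun h' => h (SimpleGraph.Adj.symm h')]
  have : (randicMatrix G * randicMatrix G).trace
      = ∑ u, ∑ v, randicMatrix G u v * randicMatrix G v u := by
    simp [Matrix.trace, Matrix.mul_apply]
  rw [this]
  simp_rw [key]
  rw [randicIndex]
  ring

theorem randic_energy_bound_connected {V : Type*} [Fintype V]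
    (G : SimpleGraph V) [DecidableRel G.Adj] (n : ℕ)
    (hn : Fintype.card V = n) (hn3 : 3 ≤ n) (hconn : G.Connected)
    (hR : (randicMatrix G).IsHermitian)
    (hRI : randicIndex G ≤ 15 * ((n : ℝ) + 1) / 56)
    (h1 : ∃ i, hR.eigenvalues i = 1) (η : ℕ)
    (hη : η = (Finset.univ.filter fun i => hR.eigenvalues i = 0).card) :
    ∑ i, |hR.eigenvalues i| ≤
      Real.sqrt (((n : ℝ) - 1 - η) * (15 * (n : ℝ) - 13) / 28) + 1 := by
  obtain ⟨i₀, hi₀⟩ := h1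
  set f := hR.eigenvalues with hf
  have hsum2 : ∑ i, f i ^ 2 ≤ 15 * ((n : ℝ) + 1) / 28 := by
    rw [← trace_sq_eq_sum_eigen hR, trace_randic_sq]
    linarith
  set S := Finset.univ.erase i₀ with hS
  have hcardS : S.card = n - 1 := by
    rw [hS, Finset.card_erase_of_mem (Finset.mem_univ _), Finset.card_univ, hn]
  set T := S.filter (fun i => ¬ f i = 0) with hT
  -- the zero set equals the zeros inside S
  have hZ : S.filter (fun i => f i = 0) = Finset.univ.filter (fun i => f i = 0) := by
    ext i
    simp only [hS, Finset.mem_filter, Finset.mem_erase, Finset.mem_univ, true_and, and_true]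
    constructor
    · rintro ⟨_, h⟩; exact h
    · intro h; exact ⟨fun hi => by rw [hi, hi₀] at h; norm_num at h, h⟩
  have hcardT : T.card = n - 1 - η := by
    have h0 : T = S \ S.filter (fun i => f i = 0) := Finset.filter_not _ _
    rw [h0, Finset.card_sdiff_of_subset (Finset.filter_subset _ _), hZ, ← hη, hcardS]
  have hηle : η ≤ n - 1 := by
    rw [hη, ← hZ, ← hcardS]
    exact Finset.card_filter_le _ _
  -- split the |·| sum
  have hsplit : ∑ i, |f i| = ∑ i ∈ S, |f i| + |f i₀| := (Finset.sum_erase_add _ _ (Finset.mem_univ i₀)).symm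
  have hST : ∑ i ∈ S, |f i| = ∑ i ∈ T, |f i| := by
    refine (Finset.sum_subset (Finset.filter_subset _ _) ?_).symm
    intro i hi hni
    have : f i = 0 := by
      by_contra h
      exact hni (Finset.mem_filter.mpr ⟨hi, h⟩)
    simp [this]
  -- bound sum of squares over T
  have hTsq : ∑ i ∈ T, f i ^ 2 ≤ (15 * (n : ℝ) - 13) / 28 := by
    have h1 : ∑ i ∈ S, f i ^ 2 + f i₀ ^ 2 = ∑ i, f i ^ 2 :=
      Finset.sum_erase_add _ _ (Finset.mem_univ i₀)
    have h2 : ∑ i ∈ T, f i ^ 2 ≤ ∑ i ∈ S, f i ^ 2 :=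
      Finset.sum_le_sum_of_subset_of_nonneg (Finset.filter_subset _ _)
        (fun i _ _ => sq_nonneg _)
    rw [hi₀] at h1
    nlinarith
  -- Cauchy–Schwarz
  have hCS : (∑ i ∈ T, |f i|) ^ 2 ≤ (T.card : ℝ) * ∑ i ∈ T, f i ^ 2 := by
    have := sq_sum_le_card_mul_sum_sq (s := T) (f := fun i => |f i|)
    simpa [sq_abs] using this
  have hcardTR : (T.card : ℝ) ≤ (n : ℝ) - 1 - η := by
    rw [hcardT]
    have h1n : 1 ≤ n := by omega
    push_cast [Nat.cast_sub hηle, Nat.cast_sub h1n]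
    ring_nf
    exact le_refl _
  have hbnd : (∑ i ∈ T, |f i|) ^ 2 ≤ ((n : ℝ) - 1 - η) * (15 * (n : ℝ) - 13) / 28 := by
    have hTsq0 : (0:ℝ) ≤ ∑ i ∈ T, f i ^ 2 := Finset.sum_nonneg fun i _ => sq_nonneg _
    have h28 : (0:ℝ) ≤ (15 * (n : ℝ) - 13) / 28 := by
      have : (3:ℝ) ≤ n := by exact_mod_cast hn3
      linarith
    have hnη : (0:ℝ) ≤ (n : ℝ) - 1 - η := le_trans (Nat.cast_nonneg _) hcardTR
    calc (∑ i ∈ T, |f i|) ^ 2 ≤ (T.card : ℝ) * ∑ i ∈ T, f i ^ 2 := hCS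
      _ ≤ ((n : ℝ) - 1 - η) * ((15 * (n : ℝ) - 13) / 28) :=
          mul_le_mul hcardTR hTsq hTsq0 hnη
      _ = ((n : ℝ) - 1 - η) * (15 * (n : ℝ) - 13) / 28 := by ring
  have hfinal : ∑ i ∈ T, |f i| ≤ Real.sqrt (((n : ℝ) - 1 - η) * (15 * (n : ℝ) - 13) / 28) := by
    have h0 : (0:ℝ) ≤ ∑ i ∈ T, |f i| := Finset.sum_nonneg fun i _ => abs_nonneg _
    rw [show ∑ i ∈ T, |f i| = Real.sqrt ((∑ i ∈ T, |f i|) ^ 2) from (Real.sqrt_sq h0).symm]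
    exact Real.sqrt_le_sqrt hbnd
  rw [hsplit, hST, hi₀]
  simp only [abs_one]
  linarith
end

section
/- Let T be a tree of even order n ≥ 2 with Randić matrix R. Assuming R_{−1}(T) ≤ (5n+8)/18 and that 1 and −1 are eigenvalues of R, then RE(T) ≤ √((n−2)·(5n−10)/9) + 2. -/
open scoped Classical

lemma trace_sq_eq_sum_sq_s7 {m : Type*} [Fintype m] [DecidableEq m] (A : Matrix m m ℝ)
    (hA : A.IsHermitian) : (A * A).trace = ∑ i, hA.eigenvalues i ^ 2 := by
  set U := (Matrix.IsHermitian.eigenvectorUnitary hA : Matrix m m ℝ)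
  have hU1 : star U * U = 1 := Matrix.mem_unitaryGroup_iff'.mp
    (Matrix.IsHermitian.eigenvectorUnitary hA).2
  have hspec := hA.spectral_theorem
  have hD : (Matrix.diagonal (RCLike.ofReal ∘ hA.eigenvalues) : Matrix m m ℝ)
      = Matrix.diagonal hA.eigenvalues := by
    congr 1
  rw [hD] at hspec
  set D := (Matrix.diagonal hA.eigenvalues : Matrix m m ℝ)
  calc (A * A).trace = (U * D * star U * (U * D * star U)).trace := by rw [Unitary.conjStarAlgAut_apply] at hspec; rw [hspec]
    _ = (U * (D * D) * star U).trace := by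
        congr 1
        calc U * D * star U * (U * D * star U) = U * D * (star U * U) * D * star U := by
              simp only [Matrix.mul_assoc]
          _ = U * (D * D) * star U := by rw [hU1]; simp only [Matrix.mul_one, Matrix.mul_assoc]
    _ = (star U * (U * (D * D))).trace := by rw [Matrix.trace_mul_comm]
    _ = (D * D).trace := by rw [← Matrix.mul_assoc, hU1, Matrix.one_mul]
    _ = ∑ i, hA.eigenvalues i ^ 2 := by
        simp [D, Matrix.diagonal_mul_diagonal, Matrix.trace_diagonal, sq]

theorem randic_energy_bound_tree_even {V : Type*} [Fintype V]
    (G : SimpleGraph V) [DecidableRel G.Adj] (n : ℕ)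
    (hn : Fintype.card V = n) (hn2 : 2 ≤ n) (heven : Even n)
    (htree : G.IsTree)
    (hR : (randicMatrix G).IsHermitian)
    (hRI : randicIndex G ≤ (5 * (n : ℝ) + 8) / 18)
    (h1 : ∃ i, hR.eigenvalues i = 1) (hneg1 : ∃ i, hR.eigenvalues i = -1) :
    ∑ i, |hR.eigenvalues i| ≤
      Real.sqrt (((n : ℝ) - 2) * (5 * (n : ℝ) - 10) / 9) + 2 := by
  obtain ⟨i1, hi1⟩ := h1
  obtain ⟨i2, hi2⟩ := hneg1
  have hne : i1 ≠ i2 := by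
    intro h; rw [h, hi2] at hi1; norm_num at hi1
  have hsumsq : ∑ i, hR.eigenvalues i ^ 2 ≤ (5 * (n : ℝ) + 8) / 9 := by
    rw [← trace_sq_eq_sum_sq_s7 _ hR, trace_randic_sq]
    linarith
  -- the rest of the eigenvalues
  set s : Finset V := (Finset.univ.erase i1).erase i2 with hs
  have hmem1 : i1 ∈ Finset.univ := Finset.mem_univ i1
  have hmem2 : i2 ∈ Finset.univ.erase i1 := Finset.mem_erase.mpr ⟨Ne.symm hne, Finset.mem_univ i2⟩
  have hcard : s.card = n - 2 := by
    rw [hs, Finset.card_erase_of_mem hmem2, Finset.card_erase_of_mem hmem1,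
      Finset.card_univ, hn]
    omega
  have hsplit : ∑ i, |hR.eigenvalues i| = ∑ i ∈ s, |hR.eigenvalues i| + 2 := by
    rw [← Finset.add_sum_erase _ _ hmem1, ← Finset.add_sum_erase _ _ hmem2, hi1, hi2]
    norm_num
    ring
  have hsplitsq : ∑ i, hR.eigenvalues i ^ 2 = ∑ i ∈ s, hR.eigenvalues i ^ 2 + 2 := by
    rw [← Finset.add_sum_erase _ _ hmem1, ← Finset.add_sum_erase _ _ hmem2, hi1, hi2]
    norm_num
    ring
  have hrest : ∑ i ∈ s, hR.eigenvalues i ^ 2 ≤ (5 * (n : ℝ) - 10) / 9 := by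
    have := hsumsq
    rw [hsplitsq] at this
    linarith
  have hCS : (∑ i ∈ s, |hR.eigenvalues i|) ^ 2
      ≤ ((n : ℝ) - 2) * ((5 * (n : ℝ) - 10) / 9) := by
    have h := Finset.sum_mul_sq_le_sq_mul_sq s (fun i => |hR.eigenvalues i|) (fun _ => (1 : ℝ))
    simp only [mul_one, one_pow, Finset.sum_const, nsmul_eq_mul] at h
    have habs : ∑ i ∈ s, |hR.eigenvalues i| ^ 2 = ∑ i ∈ s, hR.eigenvalues i ^ 2 := by
      refine Finset.sum_congr rfl fun i _ => sq_abs _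
    rw [habs] at h
    have hcardle : (s.card : ℝ) = (n : ℝ) - 2 := by
      rw [hcard]
      have : (2 : ℕ) ≤ n := hn2
      push_cast [Nat.cast_sub this]
      ring
    calc (∑ i ∈ s, |hR.eigenvalues i|) ^ 2 ≤ (∑ i ∈ s, hR.eigenvalues i ^ 2) * s.card := h
      _ ≤ ((5 * (n : ℝ) - 10) / 9) * ((n : ℝ) - 2) := by
          rw [hcardle]
          apply mul_le_mul_of_nonneg_right hrest
          have : (2 : ℝ) ≤ (n : ℝ) := by exact_mod_cast hn2
          linarith
      _ = ((n : ℝ) - 2) * ((5 * (n : ℝ) - 10) / 9) := by ring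
  have hnonneg : 0 ≤ ∑ i ∈ s, |hR.eigenvalues i| :=
    Finset.sum_nonneg fun i _ => abs_nonneg _
  have hfinal : ∑ i ∈ s, |hR.eigenvalues i|
      ≤ Real.sqrt (((n : ℝ) - 2) * (5 * (n : ℝ) - 10) / 9) := by
    rw [Real.le_sqrt hnonneg]
    calc (∑ i ∈ s, |hR.eigenvalues i|) ^ 2 ≤ ((n : ℝ) - 2) * ((5 * (n : ℝ) - 10) / 9) := hCS
      _ = ((n : ℝ) - 2) * (5 * (n : ℝ) - 10) / 9 := by ring
    have h2n : (2 : ℝ) ≤ (n : ℝ) := by exact_mod_cast hn2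
    nlinarith
  rw [hsplit]
  linarith
end

section
/- Let G be a graph on n vertices whose Randić matrix R has 1 as an eigenvalue and nullity η, and suppose R_{−1}(G) ≤ 15(n+1)/56. If η ≥ (n² + 56n − 141 − 28(n−3)√2)/(15n − 13), then RE(G) ≤ (n−3)·(√2)/2 + 2. -/
open scoped Classical

lemma sum_sq_eigenvalues_eq_trace {V : Type*} [Fintype V] [DecidableEq V] {A : Matrix V V ℝ}
    (hA : A.IsHermitian) : ∑ i, hA.eigenvalues i ^ 2 = (A * A).trace := by
  set U : Matrix V V ℝ := (hA.eigenvectorUnitary : Matrix V V ℝ) with hU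
  set D : Matrix V V ℝ := Matrix.diagonal (RCLike.ofReal ∘ hA.eigenvalues) with hD
  have hUU : star U * U = 1 := Matrix.mem_unitaryGroup_iff'.mp hA.eigenvectorUnitary.2
  have hspec : A = U * D * star U := hA.spectral_theorem
  symm
  calc (A * A).trace = (U * D * star U * (U * D * star U)).trace := by rw [← hspec]
    _ = (U * (D * D) * star U).trace := by
        rw [show U * D * star U * (U * D * star U) = U * (D * (star U * U) * D) * star U by
          simp only [mul_assoc]]
        rw [hUU, mul_one]
    _ = (D * D).trace := by
        rw [Matrix.trace_mul_cycle, ← mul_assoc, hUU, one_mul]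
    _ = ∑ i, hA.eigenvalues i ^ 2 := by
        simp [hD, Matrix.diagonal_mul_diagonal, Matrix.trace_diagonal, sq]

theorem randic_energy_bound_large_nullity {V : Type*} [Fintype V]
    (G : SimpleGraph V) [DecidableRel G.Adj] (n : ℕ)
    (hn : Fintype.card V = n) (hn3 : 3 ≤ n)
    (hR : (randicMatrix G).IsHermitian)
    (h1 : ∃ i, hR.eigenvalues i = 1)
    (hRI : randicIndex G ≤ 15 * ((n : ℝ) + 1) / 56) (η : ℕ)
    (hη : η = (Finset.univ.filter fun i => hR.eigenvalues i = 0).card)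
    (hnull : ((n : ℝ) ^ 2 + 56 * n - 141 - 28 * ((n : ℝ) - 3) * Real.sqrt 2) /
        (15 * (n : ℝ) - 13) ≤ η) :
    ∑ i, |hR.eigenvalues i| ≤ ((n : ℝ) - 3) * Real.sqrt 2 / 2 + 2 := by
  classical
  obtain ⟨i₀, hi₀⟩ := h1
  set f := hR.eigenvalues with hf
  set Z : Finset V := Finset.univ.filter (fun i => f i = 0) with hZ
  have hi₀Z : i₀ ∉ Z := by
    simp only [hZ, Finset.mem_filter, Finset.mem_univ, true_and]
    rw [hi₀]; norm_num
  set B : Finset V := insert i₀ Z with hB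
  have hcardB : B.card = η + 1 := by
    rw [hB, Finset.card_insert_of_notMem hi₀Z, hη]
  have hT2 : ∑ i, f i ^ 2 = 2 * randicIndex G := by
    rw [hf, sum_sq_eigenvalues_eq_trace hR, trace_randic_sq]
  have hTle : ∑ i, f i ^ 2 ≤ 15 * ((n : ℝ) + 1) / 28 := by rw [hT2]; linarith
  set S : Finset V := Finset.univ \ B with hS
  have hsplit : ∀ g : V → ℝ, ∑ i, g i = ∑ i ∈ S, g i + ∑ i ∈ B, g i := by
    intro g
    rw [hS, Finset.sum_sdiff (Finset.subset_univ B)]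
  have hZ0 : ∀ g : V → ℝ, (∀ i ∈ Z, g i = 0) → ∑ i ∈ B, g i = g i₀ := by
    intro g hg
    rw [hB, Finset.sum_insert hi₀Z, Finset.sum_eq_zero hg, add_zero]
  have hsumB_abs : ∑ i ∈ B, |f i| = 1 := by
    rw [hZ0 _ (fun i hi => by
      simp only [hZ, Finset.mem_filter, Finset.mem_univ, true_and] at hi
      rw [hi, abs_zero])]
    rw [hi₀]; norm_num
  have hsumB_sq : ∑ i ∈ B, f i ^ 2 = 1 := by
    rw [hZ0 _ (fun i hi => by
      simp only [hZ, Finset.mem_filter, Finset.mem_univ, true_and] at hi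
      rw [hi]; ring)]
    rw [hi₀]; norm_num
  have hSsq : ∑ i ∈ S, f i ^ 2 = (∑ i, f i ^ 2) - 1 := by
    rw [hsplit (fun i => f i ^ 2), hsumB_sq]; ring
  have hSsq0 : 0 ≤ ∑ i ∈ S, f i ^ 2 := Finset.sum_nonneg fun i _ => sq_nonneg _
  have hBn : η + 1 ≤ n := by
    rw [← hcardB, ← hn, ← Finset.card_univ]
    exact Finset.card_le_card (Finset.subset_univ B)
  have hcardS : (S.card : ℝ) = (n : ℝ) - (η + 1) := by
    rw [hS, Finset.card_sdiff_of_subset (Finset.subset_univ B), Finset.card_univ, hn, hcardB]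
    push_cast [Nat.cast_sub hBn]
    ring
  have habs0 : 0 ≤ ∑ i ∈ S, |f i| := Finset.sum_nonneg fun i _ => abs_nonneg _
  have hCS : (∑ i ∈ S, |f i|) ^ 2 ≤ (S.card : ℝ) * ∑ i ∈ S, f i ^ 2 := by
    have := sq_sum_le_card_mul_sum_sq (s := S) (f := fun i => |f i|)
    simpa [sq_abs] using this
  set s := Real.sqrt 2 with hs
  have hs2 : s ^ 2 = 2 := Real.sq_sqrt (by norm_num)
  have hs1 : 1 ≤ s := by nlinarith [Real.sqrt_nonneg 2]
  have hn' : (3 : ℝ) ≤ (n : ℝ) := by exact_mod_cast hn3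
  have hd : (0 : ℝ) < 15 * (n : ℝ) - 13 := by linarith
  have hnull' : (n : ℝ) ^ 2 + 56 * n - 141 - 28 * ((n : ℝ) - 3) * s ≤ (η : ℝ) * (15 * n - 13) := by
    rw [div_le_iff₀ hd] at hnull
    linarith
  have hrhs0 : 0 ≤ ((n : ℝ) - 3) * s / 2 + 1 := by nlinarith
  have harg : (S.card : ℝ) * ∑ i ∈ S, f i ^ 2 ≤ (((n : ℝ) - 3) * s / 2 + 1) ^ 2 := by
    have h1' : ∑ i ∈ S, f i ^ 2 ≤ (15 * (n : ℝ) - 13) / 28 := by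
      rw [hSsq]; linarith
    have hScard0 : (0 : ℝ) ≤ (S.card : ℝ) := Nat.cast_nonneg _
    have h2' : (S.card : ℝ) * ∑ i ∈ S, f i ^ 2
        ≤ (S.card : ℝ) * ((15 * (n : ℝ) - 13) / 28) :=
      mul_le_mul_of_nonneg_left h1' hScard0
    calc (S.card : ℝ) * ∑ i ∈ S, f i ^ 2 ≤ (S.card : ℝ) * ((15 * (n : ℝ) - 13) / 28) := h2'
      _ = ((n : ℝ) - (η + 1)) * ((15 * (n : ℝ) - 13) / 28) := by rw [hcardS]
      _ ≤ (((n : ℝ) - 3) * s / 2 + 1) ^ 2 := by nlinarith [hnull', hs2]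
  have hSle : ∑ i ∈ S, |f i| ≤ ((n : ℝ) - 3) * s / 2 + 1 := by
    calc ∑ i ∈ S, |f i| = Real.sqrt ((∑ i ∈ S, |f i|) ^ 2) := (Real.sqrt_sq habs0).symm
      _ ≤ Real.sqrt ((((n : ℝ) - 3) * s / 2 + 1) ^ 2) :=
        Real.sqrt_le_sqrt (le_trans hCS harg)
      _ = ((n : ℝ) - 3) * s / 2 + 1 := Real.sqrt_sq hrhs0
  rw [hsplit (fun i => |f i|), hsumB_abs]
  linarith
end

section
/- Let G be a connected bipartite graph on n ≥ 3 vertices whose Randić matrix R satisfies R_{−1}(G) ≤ n/4 and has both 1 and −1 as eigenvalues. Then RE(G) ≤ √(n−2)·√(n−4)·(√2)/2 + 2. -/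
open scoped Classical

lemma trace_sq_eq_sum_sq_aux {V : Type*} [Fintype V] [DecidableEq V]
    {A : Matrix V V ℝ} (hA : A.IsHermitian) :
    (A * A).trace = ∑ i, hA.eigenvalues i ^ 2 := by
  set U := (hA.eigenvectorUnitary : Matrix V V ℝ) with hU
  set D := Matrix.diagonal (RCLike.ofReal ∘ hA.eigenvalues : V → ℝ) with hD
  have hsU : star U * U = 1 := hA.eigenvectorUnitary.2.1
  have hDD : D * D = Matrix.diagonal (fun i => hA.eigenvalues i ^ 2) := by
    rw [hD, Matrix.diagonal_mul_diagonal]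
    congr 1
    ext i
    simp [RCLike.ofReal_real_eq_id, sq]
  calc (A * A).trace = (U * D * star U * (U * D * star U)).trace := by
        conv_lhs => rw [hA.spectral_theorem, Unitary.conjStarAlgAut_apply]
    _ = (U * (D * D) * star U).trace := by
        have : U * D * star U * (U * D * star U) = U * (D * D) * star U := by
          have : U * D * star U * (U * D * star U) = U * D * (star U * U) * D * star U := by
            noncomm_ring
          rw [this, hsU, Matrix.mul_one]
          noncomm_ring
        rw [this]
    _ = (D * D * star U * U).trace := by rw [Matrix.mul_assoc, Matrix.trace_mul_comm]
    _ = (D * D).trace := by rw [Matrix.mul_assoc, hsU, Matrix.mul_one]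
    _ = ∑ i, hA.eigenvalues i ^ 2 := by rw [hDD, Matrix.trace_diagonal]

theorem randic_energy_bound_bipartite_no_suspended_paths {V : Type*} [Fintype V]
    (G : SimpleGraph V) [DecidableRel G.Adj] (n : ℕ)
    (hn : Fintype.card V = n) (hn3 : 3 ≤ n) (hconn : G.Connected)
    (hbip : G.Colorable 2)
    (hR : (randicMatrix G).IsHermitian)
    (hRI : randicIndex G ≤ (n : ℝ) / 4)
    (h1 : ∃ i, hR.eigenvalues i = 1) (hneg1 : ∃ i, hR.eigenvalues i = -1) :
    ∑ i, |hR.eigenvalues i| ≤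
      Real.sqrt ((n : ℝ) - 2) * Real.sqrt ((n : ℝ) - 4) * Real.sqrt 2 / 2 + 2 := by
  classical
  obtain ⟨i, hi⟩ := h1
  obtain ⟨j, hj⟩ := hneg1
  have hij : j ≠ i := by
    intro h; rw [h, hi] at hj; norm_num at hj
  set lam := hR.eigenvalues with hlam
  -- key pointwise identity
  have key : ∀ u v, randicMatrix G u v * randicMatrix G v u =
      if G.Adj u v then 1 / ((G.degree u : ℝ) * (G.degree v : ℝ)) else 0 := by
    intro u v
    by_cases h : G.Adj u v
    · simp only [randicMatrix, h, if_true, h.symm]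
      rw [mul_comm ((G.degree v : ℝ)) ((G.degree u : ℝ)), div_mul_div_comm, one_mul,
        Real.mul_self_sqrt (by positivity)]
    · have h' : ¬ G.Adj v u := fun hh => h hh.symm
      simp [randicMatrix, h, h']
  have htr : (randicMatrix G * randicMatrix G).trace = 2 * randicIndex G := by
    have h1 : (randicMatrix G * randicMatrix G).trace
        = ∑ u, ∑ v, randicMatrix G u v * randicMatrix G v u := by
      simp [Matrix.trace, Matrix.diag, Matrix.mul_apply]
    rw [h1]
    simp_rw [key]
    rw [randicIndex]; ring
  have hS : ∑ k, lam k ^ 2 ≤ (n : ℝ) / 2 := by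
    rw [hlam, ← trace_sq_eq_sum_sq_aux hR, htr]; linarith
  set s : Finset V := (Finset.univ.erase i).erase j with hs
  have hjmem : j ∈ Finset.univ.erase i := Finset.mem_erase.mpr ⟨hij, Finset.mem_univ j⟩
  have esplit : ∀ f : V → ℝ, ∑ k, f k = f i + (f j + ∑ k ∈ s, f k) := by
    intro f
    rw [hs, Finset.add_sum_erase _ f hjmem, Finset.add_sum_erase _ f (Finset.mem_univ i)]
  have hs2 : ∑ k ∈ s, lam k ^ 2 ≤ (n : ℝ) / 2 - 2 := by
    have := esplit (fun k => lam k ^ 2)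
    simp only [hi, hj] at this
    rw [this] at hS
    norm_num at hS
    linarith
  have hs2nn : (0:ℝ) ≤ ∑ k ∈ s, lam k ^ 2 := Finset.sum_nonneg fun _ _ => sq_nonneg _
  have hn4 : (4:ℝ) ≤ (n : ℝ) := by linarith
  have hcard : (s.card : ℝ) = (n : ℝ) - 2 := by
    have hc : s.card = n - 2 := by
      rw [hs, Finset.card_erase_of_mem hjmem, Finset.card_erase_of_mem (Finset.mem_univ i),
        Finset.card_univ, hn]
      omega
    rw [hc]
    have : (2:ℕ) ≤ n := by omega
    push_cast [Nat.cast_sub this]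
    ring
  have hcs : (∑ k ∈ s, |lam k|) ^ 2 ≤ (s.card : ℝ) * ∑ k ∈ s, lam k ^ 2 := by
    have := sq_sum_le_card_mul_sum_sq (s := s) (f := fun k => |lam k|)
    simpa [sq_abs] using this
  have habsnn : (0:ℝ) ≤ ∑ k ∈ s, |lam k| := Finset.sum_nonneg fun _ _ => abs_nonneg _
  have hmain : ∑ k ∈ s, |lam k| ≤ Real.sqrt (((n:ℝ) - 2) * ((n:ℝ)/2 - 2)) := by
    rw [← Real.sqrt_sq habsnn]
    apply Real.sqrt_le_sqrt
    calc (∑ k ∈ s, |lam k|) ^ 2 ≤ (s.card : ℝ) * ∑ k ∈ s, lam k ^ 2 := hcs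
      _ ≤ ((n:ℝ) - 2) * ((n:ℝ)/2 - 2) := by
          rw [hcard]
          exact mul_le_mul_of_nonneg_left hs2 (by linarith)
  have hsqrt_eq : Real.sqrt (((n:ℝ) - 2) * ((n:ℝ)/2 - 2))
      = Real.sqrt ((n:ℝ) - 2) * Real.sqrt ((n:ℝ) - 4) * Real.sqrt 2 / 2 := by
    have h2 : ((n:ℝ) - 2) * ((n:ℝ)/2 - 2) = (((n:ℝ) - 2) * (((n:ℝ) - 4) * 2)) / 4 := by ring
    rw [h2, Real.sqrt_div (by nlinarith) 4,
      Real.sqrt_mul (by linarith) _, Real.sqrt_mul (by linarith) 2,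
      show (4:ℝ) = 2^2 by norm_num, Real.sqrt_sq (by norm_num)]
    ring
  have hfin := esplit (fun k => |lam k|)
  simp only [hi, hj] at hfin
  rw [hfin]
  rw [hsqrt_eq] at hmain
  norm_num
  linarith
end

section
/- Let G be a connected graph on n ≥ 3 vertices whose Randić matrix R has 1 as an eigenvalue, nullity η ≥ 1, and satisfies R_{−1}(G) ≤ n/4. Then RE(G) ≤ √(n−1−η)·√(n−2)·(√2)/2 + 1 < (n−3)·(√2)/2 + 2. -/
open scoped Classical

lemma trace_sq_eq {V : Type*} [Fintype V] (A : Matrix V V ℝ) (hA : A.IsHermitian) :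
    (A * A).trace = ∑ i, hA.eigenvalues i ^ 2 := by
  have hU : (star (hA.eigenvectorUnitary : Matrix V V ℝ)) * (hA.eigenvectorUnitary : Matrix V V ℝ) = 1 :=
    Matrix.mem_unitaryGroup_iff'.mp (hA.eigenvectorUnitary).2
  set U := (hA.eigenvectorUnitary : Matrix V V ℝ) with hUdef
  set D : Matrix V V ℝ := Matrix.diagonal (RCLike.ofReal ∘ hA.eigenvalues) with hD
  have key : A * A = U * (D * D) * star U := by
    conv_lhs => rw [hA.spectral_theorem]
    rw [Unitary.conjStarAlgAut_apply]
    rw [← hD, ← hUdef]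
    simp only [Matrix.mul_assoc]
    rw [← Matrix.mul_assoc (star U), hU, Matrix.one_mul]
  rw [key, Matrix.trace_mul_cycle, ← Matrix.mul_assoc, hU, Matrix.one_mul, hD,
    Matrix.diagonal_mul_diagonal, Matrix.trace_diagonal]
  simp [sq]

theorem randic_energy_bound_no_suspended_paths {V : Type*} [Fintype V]
    (G : SimpleGraph V) [DecidableRel G.Adj] (n : ℕ)
    (hn : Fintype.card V = n) (hn3 : 3 ≤ n) (hconn : G.Connected)
    (hR : (randicMatrix G).IsHermitian)
    (h1 : ∃ i, hR.eigenvalues i = 1) (η : ℕ)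
    (hη : η = (Finset.univ.filter fun i => hR.eigenvalues i = 0).card)
    (hη1 : 1 ≤ η)
    (hRI : randicIndex G ≤ (n : ℝ) / 4) :
    ∑ i, |hR.eigenvalues i| ≤
      Real.sqrt ((n : ℝ) - 1 - η) * Real.sqrt ((n : ℝ) - 2) * Real.sqrt 2 / 2 + 1 ∧
    Real.sqrt ((n : ℝ) - 1 - η) * Real.sqrt ((n : ℝ) - 2) * Real.sqrt 2 / 2 + 1 <
      ((n : ℝ) - 3) * Real.sqrt 2 / 2 + 2 := by
  have h2 : Real.sqrt 2 ^ 2 = 2 := Real.sq_sqrt (by norm_num)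
  have h2n : (0:ℝ) ≤ Real.sqrt 2 := Real.sqrt_nonneg 2
  have hn2 : (0:ℝ) ≤ (n:ℝ) - 2 := by
    have : (3:ℝ) ≤ n := by exact_mod_cast hn3
    linarith
  set lam := hR.eigenvalues with hlam
  obtain ⟨i0, hi0⟩ := h1
  set Z : Finset V := Finset.univ.filter fun i => lam i = 0 with hZ
  have hi0Z : i0 ∉ Z := by
    simp only [hZ, Finset.mem_filter]
    rintro ⟨-, h⟩; rw [hi0] at h; norm_num at h
  set A : Finset V := insert i0 Z with hA
  have hcardA : A.card = η + 1 := by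
    rw [hA, Finset.card_insert_of_notMem hi0Z, hη]
  set S : Finset V := Finset.univ \ A with hS
  have hcardS : S.card = n - (η + 1) := by
    rw [hS, Finset.card_sdiff_of_subset (Finset.subset_univ A), hcardA, Finset.card_univ, hn]
  have hηn : η + 1 ≤ n := by
    rw [← hcardA, ← hn, ← Finset.card_univ]
    exact Finset.card_le_card (Finset.subset_univ A)
  have hcastS : (S.card : ℝ) = (n:ℝ) - 1 - η := by
    rw [hcardS]
    push_cast [hηn]
    ring
  -- trace
  have hT : ∑ i, lam i ^ 2 = 2 * randicIndex G := by
    rw [← trace_sq_eq _ hR, trace_randic_sq]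
  have hTle : ∑ i, lam i ^ 2 ≤ (n:ℝ) / 2 := by
    rw [hT]; linarith
  -- split sums
  have hsplit : ∀ f : V → ℝ, ∑ i, f i = (∑ i ∈ S, f i) + (f i0 + ∑ i ∈ Z, f i) := by
    intro f
    rw [hS, Finset.sum_sdiff_eq_sub (Finset.subset_univ A), hA,
      Finset.sum_insert hi0Z]
    ring
  have hZabs : ∑ i ∈ Z, |lam i| = 0 := by
    refine Finset.sum_eq_zero fun i hi => ?_
    simp only [hZ, Finset.mem_filter] at hi
    rw [hi.2, abs_zero]
  have hZsq : ∑ i ∈ Z, lam i ^ 2 = 0 := by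
    refine Finset.sum_eq_zero fun i hi => ?_
    simp only [hZ, Finset.mem_filter] at hi
    rw [hi.2]; ring
  have hSsq : ∑ i ∈ S, lam i ^ 2 ≤ ((n:ℝ) - 2) / 2 := by
    have := hsplit (fun i => lam i ^ 2)
    rw [hZsq, hi0] at this
    linarith [hTle, this]
  have hSsq0 : (0:ℝ) ≤ ∑ i ∈ S, lam i ^ 2 :=
    Finset.sum_nonneg fun i _ => sq_nonneg _
  -- Cauchy-Schwarz
  have hCS : (∑ i ∈ S, |lam i|) ^ 2 ≤ (S.card : ℝ) * ∑ i ∈ S, lam i ^ 2 := by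
    have := sq_sum_le_card_mul_sum_sq (s := S) (f := fun i => |lam i|)
    simpa [sq_abs] using this
  have hSabs : ∑ i ∈ S, |lam i| ≤ Real.sqrt ((n:ℝ) - 1 - η) * Real.sqrt (((n:ℝ) - 2) / 2) := by
    have h0 : (0:ℝ) ≤ ∑ i ∈ S, |lam i| := Finset.sum_nonneg fun i _ => abs_nonneg _
    calc ∑ i ∈ S, |lam i| = Real.sqrt ((∑ i ∈ S, |lam i|) ^ 2) := by
          rw [Real.sqrt_sq h0]
      _ ≤ Real.sqrt ((S.card : ℝ) * ∑ i ∈ S, lam i ^ 2) := Real.sqrt_le_sqrt hCS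
      _ = Real.sqrt (S.card : ℝ) * Real.sqrt (∑ i ∈ S, lam i ^ 2) := Real.sqrt_mul (Nat.cast_nonneg _) _
      _ ≤ Real.sqrt ((n:ℝ) - 1 - η) * Real.sqrt (((n:ℝ) - 2) / 2) := by
          rw [hcastS]
          exact mul_le_mul_of_nonneg_left (Real.sqrt_le_sqrt hSsq) (Real.sqrt_nonneg _)
  have hhalf : Real.sqrt (((n:ℝ) - 2) / 2) = Real.sqrt ((n:ℝ) - 2) * Real.sqrt 2 / 2 := by
    rw [Real.sqrt_div hn2]
    rw [div_eq_div_iff (by positivity) (by norm_num)]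
    nlinarith [Real.sqrt_nonneg ((n:ℝ) - 2)]
  constructor
  · have := hsplit (fun i => |lam i|)
    rw [hZabs, hi0, abs_one] at this
    rw [hhalf] at hSabs
    rw [this]
    linarith
  · have hmono : Real.sqrt ((n:ℝ) - 1 - η) ≤ Real.sqrt ((n:ℝ) - 2) := by
      apply Real.sqrt_le_sqrt
      have : (1:ℝ) ≤ η := by exact_mod_cast hη1
      linarith
    have hprod : Real.sqrt ((n:ℝ) - 1 - η) * Real.sqrt ((n:ℝ) - 2) ≤ (n:ℝ) - 2 := by
      calc Real.sqrt ((n:ℝ) - 1 - η) * Real.sqrt ((n:ℝ) - 2)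
          ≤ Real.sqrt ((n:ℝ) - 2) * Real.sqrt ((n:ℝ) - 2) :=
            mul_le_mul_of_nonneg_right hmono (Real.sqrt_nonneg _)
        _ = (n:ℝ) - 2 := Real.mul_self_sqrt hn2
    have hlt : Real.sqrt 2 < 2 := by nlinarith
    nlinarith [mul_le_mul_of_nonneg_right hprod h2n]
end

section
/- Let G be a connected TB graph on n ≥ 3 vertices (bipartite with parts A, B, every vertex of B of degree 1 or 2) with Randić matrix R. Then tr(R²) restricted to the A-block satisfies Σ_{a∈A} (R²)_{a,a} ≤ (n+1)/4, and hence tr(R²) ≤ (n+1)/2. -/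
open scoped Classical

lemma conn_card_le_edges {V : Type*} [Fintype V] [DecidableEq V]
    (G : SimpleGraph V) [DecidableRel G.Adj] (h : G.Connected) :
    Fintype.card V ≤ G.edgeFinset.card + 1 := by
  have hne := h.nonempty
  inhabit V
  have hex : ∀ w : V, w ≠ default → ∃ q : G.Walk w default, q.length = G.dist w default :=
    fun w _ => (h w default).exists_walk_length_eq_dist
  choose p hp using hex
  have hnil : ∀ (w : V) (hw : w ≠ default), ¬ (p w hw).Nil :=
    fun w hw => SimpleGraph.Walk.not_nil_of_ne hw
  have hlt : ∀ (w : V) (hw : w ≠ default),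
      G.dist ((p w hw).getVert 1) default < G.dist w default := by
    intro w hw
    have h1 : (p w hw).tail.length + 1 = (p w hw).length :=
      SimpleGraph.Walk.length_tail_add_one (hnil w hw)
    have h2 : G.dist ((p w hw).getVert 1) default ≤ (p w hw).tail.length :=
      SimpleGraph.dist_le (p w hw).tail
    have h3 : 0 < G.dist w default := h.pos_dist_of_ne hw
    have h4 := hp w hw
    omega
  classical
  set f : V → Sym2 V := fun w =>
    if hw : w = default then s(default, default) else s(w, (p w hw).getVert 1) with hf
  have hmaps : ∀ w ∈ ({default}ᶜ : Finset V), f w ∈ G.edgeFinset := by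
    intro w hw
    simp only [Finset.mem_compl, Finset.mem_singleton] at hw
    rw [hf]
    simp only [dif_neg hw]
    rw [SimpleGraph.mem_edgeFinset, SimpleGraph.mem_edgeSet]
    exact (p w hw).adj_snd (hnil w hw)
  have hinj : Set.InjOn f ({default}ᶜ : Finset V) := by
    intro w1 h1 w2 h2 heq
    simp only [Finset.coe_compl, Set.mem_compl_iff, Finset.coe_singleton,
      Set.mem_singleton_iff] at h1 h2
    by_contra hne12
    rw [hf] at heq
    simp only [dif_neg h1, dif_neg h2, Sym2.eq_iff] at heq
    rcases heq with ⟨rfl, -⟩ | ⟨e1, e2⟩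
    · exact hne12 rfl
    · have l1 := hlt w1 h1
      have l2 := hlt w2 h2
      rw [e2] at l1
      rw [← e1] at l2
      omega
  have := Finset.card_le_card_of_injOn f hmaps hinj
  have hc : ({default}ᶜ : Finset V).card = Fintype.card V - 1 := by
    rw [Finset.card_compl, Finset.card_singleton]
  have hpos : 0 < Fintype.card V := Fintype.card_pos
  omega

lemma pendant_pair {V : Type*} [Fintype V] (G : SimpleGraph V) [DecidableRel G.Adj]
    (hconn : G.Connected) (h3 : 3 ≤ Fintype.card V) (u v : V)
    (hu : G.neighborFinset u = {v}) (hv : G.neighborFinset v = {u}) : False := by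
  classical
  have key : ∀ (w z : V) (q : G.Walk w z), (z = u ∨ z = v) → (w = u ∨ w = v) := by
    intro w z q
    induction q with
    | nil => exact id
    | @cons w x _ h _ ih =>
      intro hz
      rcases ih hz with rfl | rfl
      · right
        have : w ∈ G.neighborFinset x := by
          rw [SimpleGraph.mem_neighborFinset]; exact h.symm
        rw [hu] at this
        simpa using this
      · left
        have : w ∈ G.neighborFinset x := by
          rw [SimpleGraph.mem_neighborFinset]; exact h.symm
        rw [hv] at this
        simpa using this
  have hsub : (Finset.univ : Finset V) ⊆ {u, v} := by
    intro w _
    rcases key w u (hconn w u).some (Or.inl rfl) with rfl | rfl <;> simp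
  have hle := Finset.card_le_card hsub
  rw [Finset.card_univ] at hle
  have : ({u, v} : Finset V).card ≤ 2 := Finset.card_insert_le _ _ |>.trans (by simp)
  omega

theorem TB_trace_bound {A B : Type*} [Fintype A] [Fintype B]
    (G : SimpleGraph (A ⊕ B)) [DecidableRel G.Adj] (n : ℕ)
    (hn : Fintype.card (A ⊕ B) = n) (hn3 : 3 ≤ n)
    (hconn : G.Connected)
    (hA : ∀ a a' : A, ¬ G.Adj (Sum.inl a) (Sum.inl a'))
    (hB : ∀ b b' : B, ¬ G.Adj (Sum.inr b) (Sum.inr b'))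
    (hdegB : ∀ b : B, G.degree (Sum.inr b) = 1 ∨ G.degree (Sum.inr b) = 2) :
    (∑ a : A, (randicMatrix G * randicMatrix G) (Sum.inl a) (Sum.inl a)) ≤
        ((n : ℝ) + 1) / 4 ∧
      (randicMatrix G * randicMatrix G).trace ≤ ((n : ℝ) + 1) / 2 := by
  classical
  set R := randicMatrix G with hR
  have hcard3 : 3 ≤ Fintype.card (A ⊕ B) := by omega
  -- diagonal entries of R²
  have hdiag : ∀ u : A ⊕ B, (R * R) u u =
      ∑ v, (if G.Adj u v then (1:ℝ) / ((G.degree u : ℝ) * (G.degree v : ℝ)) else 0) := by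
    intro u
    rw [Matrix.mul_apply]
    refine Finset.sum_congr rfl fun v _ => ?_
    by_cases h : G.Adj u v
    · have h' : G.Adj v u := h.symm
      rw [hR]
      simp only [randicMatrix, if_pos h, if_pos h']
      have hc : (G.degree v : ℝ) * (G.degree u : ℝ) = (G.degree u : ℝ) * (G.degree v : ℝ) :=
        mul_comm _ _
      rw [hc, div_mul_div_comm, one_mul, Real.mul_self_sqrt (by positivity)]
    · have h' : ¬ G.Adj v u := fun hh => h hh.symm
      rw [hR]
      simp [randicMatrix, if_neg h, if_neg h']
  -- neighbor sets
  set Na : A → Finset B := fun a => Finset.univ.filter (fun b => G.Adj (Sum.inl a) (Sum.inr b))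
    with hNa
  set Nb : B → Finset A := fun b => Finset.univ.filter (fun a => G.Adj (Sum.inr b) (Sum.inl a))
    with hNb
  have hdegA : ∀ a : A, G.degree (Sum.inl a) = (Na a).card := by
    intro a
    have hmap : G.neighborFinset (Sum.inl a) = (Na a).map ⟨Sum.inr, Sum.inr_injective⟩ := by
      ext v
      cases v with
      | inl a' => simp [SimpleGraph.mem_neighborFinset, hA a a', hNa]
      | inr b => simp [SimpleGraph.mem_neighborFinset, hNa]
    rw [← SimpleGraph.card_neighborFinset_eq_degree, hmap, Finset.card_map]
  have hdegB' : ∀ b : B, G.degree (Sum.inr b) = (Nb b).card := by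
    intro b
    have hmap : G.neighborFinset (Sum.inr b) = (Nb b).map ⟨Sum.inl, Sum.inl_injective⟩ := by
      ext v
      cases v with
      | inl a => simp [SimpleGraph.mem_neighborFinset, hNb]
      | inr b' => simp [SimpleGraph.mem_neighborFinset, hB b b', hNb]
    rw [← SimpleGraph.card_neighborFinset_eq_degree, hmap, Finset.card_map]
  have hdegpos : ∀ v : A ⊕ B, 0 < G.degree v := by
    intro v
    rw [SimpleGraph.degree_pos_iff_exists_adj]
    obtain ⟨w, hw⟩ := Fintype.exists_ne_of_one_lt_card (by omega) v
    have q : G.Walk v w := (hconn v w).some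
    have hnil : ¬ q.Nil := SimpleGraph.Walk.not_nil_of_ne (Ne.symm hw)
    exact ⟨q.getVert 1, q.adj_snd hnil⟩
  -- counts of degree-1 and degree-2 neighbors
  set k : A → ℕ := fun a => ((Na a).filter (fun b => G.degree (Sum.inr b) = 1)).card with hk
  set m : A → ℕ := fun a => ((Na a).filter (fun b => G.degree (Sum.inr b) = 2)).card with hm
  have hfilter2 : ∀ a, (Na a).filter (fun b => ¬ G.degree (Sum.inr b) = 1)
      = (Na a).filter (fun b => G.degree (Sum.inr b) = 2) := by
    intro a
    apply Finset.filter_congr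
    intro b _
    rcases hdegB b with h | h <;> simp [h]
  have hkm : ∀ a, k a + m a = (Na a).card := by
    intro a
    have h := Finset.card_filter_add_card_filter_not
      (s := Na a) (p := fun b => G.degree (Sum.inr b) = 1)
    rw [hfilter2 a] at h
    exact h
  -- per-vertex diagonal value
  have hval : ∀ a : A,
      (∑ b : B, if G.Adj (Sum.inl a) (Sum.inr b) then
          (1:ℝ) / ((G.degree (Sum.inl a) : ℝ) * (G.degree (Sum.inr b) : ℝ)) else 0)
        = (1 / (G.degree (Sum.inl a) : ℝ)) * ((k a : ℝ) + (m a : ℝ) / 2) := by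
    intro a
    rw [← Finset.sum_filter]
    have hterm : ∀ b ∈ Na a,
        (1:ℝ) / ((G.degree (Sum.inl a) : ℝ) * (G.degree (Sum.inr b) : ℝ))
          = (1 / (G.degree (Sum.inl a) : ℝ)) * (1 / (G.degree (Sum.inr b) : ℝ)) := by
      intro b _
      rw [div_mul_div_comm, one_mul]
    rw [Finset.sum_congr rfl hterm, ← Finset.mul_sum]
    congr 1
    have e1 : ∑ b ∈ (Na a).filter (fun b => G.degree (Sum.inr b) = 1),
        (1:ℝ) / (G.degree (Sum.inr b) : ℝ) = (k a : ℝ) := by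
      have : ∀ b ∈ (Na a).filter (fun b => G.degree (Sum.inr b) = 1),
          (1:ℝ) / (G.degree (Sum.inr b) : ℝ) = 1 := by
        intro b hb
        rw [(Finset.mem_filter.mp hb).2]
        norm_num
      rw [Finset.sum_congr rfl this, Finset.sum_const, nsmul_eq_mul, mul_one]
    have e2 : ∑ b ∈ (Na a).filter (fun b => G.degree (Sum.inr b) = 2),
        (1:ℝ) / (G.degree (Sum.inr b) : ℝ) = (m a : ℝ) / 2 := by
      have : ∀ b ∈ (Na a).filter (fun b => G.degree (Sum.inr b) = 2),
          (1:ℝ) / (G.degree (Sum.inr b) : ℝ) = 1 / 2 := by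
        intro b hb
        rw [(Finset.mem_filter.mp hb).2]
        norm_num
      rw [Finset.sum_congr rfl this, Finset.sum_const, nsmul_eq_mul]
      have : ((((Na a).filter (fun b => G.degree (Sum.inr b) = 2)).card : ℝ)) = (m a : ℝ) := rfl
      rw [this]
      ring
    rw [← Finset.sum_filter_add_sum_filter_not (Na a) (fun b => G.degree (Sum.inr b) = 1),
      hfilter2 a, e1, e2]
  -- per-vertex bound
  have hbound : ∀ a : A,
      (1 / (G.degree (Sum.inl a) : ℝ)) * ((k a : ℝ) + (m a : ℝ) / 2)
        ≤ 1 / 2 + (k a : ℝ) / 4 := by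
    intro a
    have hda : G.degree (Sum.inl a) = k a + m a := by rw [hdegA a, hkm a]
    have hdapos : 0 < k a + m a := hda ▸ hdegpos (Sum.inl a)
    by_cases hK : k a = 0
    · rw [hda, hK]
      push_cast
      rw [zero_add, zero_add, zero_div, add_zero]
      have hm0 : (0:ℝ) < (m a : ℝ) := by
        have : 0 < m a := by omega
        exact_mod_cast this
      rw [one_div, inv_mul_eq_div, div_le_div_iff₀ hm0 (by norm_num)]
      ring_nf
      linarith
    · -- k a ≥ 1 ; show k a + m a ≥ 2
      have hge2 : 2 ≤ k a + m a := by
        by_contra hlt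
        have hk1 : k a = 1 := by omega
        have hm0 : m a = 0 := by omega
        -- Na a is a singleton {b} with degree (inr b) = 1
        have hcard1 : (Na a).card = 1 := by rw [← hkm a]; omega
        obtain ⟨b, hb⟩ := Finset.card_eq_one.mp hcard1
        have hbNa : b ∈ Na a := by rw [hb]; exact Finset.mem_singleton_self b
        have hadj : G.Adj (Sum.inl a) (Sum.inr b) := by
          rw [hNa] at hbNa
          simpa using hbNa
        have hdegb1 : G.degree (Sum.inr b) = 1 := by
          rcases hdegB b with h | h
          · exact h
          · exfalso
            have : b ∈ (Na a).filter (fun b => G.degree (Sum.inr b) = 2) := by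
              rw [Finset.mem_filter]; exact ⟨hbNa, h⟩
            have hmpos : 0 < m a := Finset.card_pos.mpr ⟨b, this⟩
            omega
        -- neighborFinset (inl a) = {inr b}
        have hu : G.neighborFinset (Sum.inl a) = {Sum.inr b} := by
          have hd1 : (G.neighborFinset (Sum.inl a)).card = 1 := by
            rw [SimpleGraph.card_neighborFinset_eq_degree, hdegA a]
            omega
          obtain ⟨x, hx⟩ := Finset.card_eq_one.mp hd1
          have : Sum.inr b ∈ G.neighborFinset (Sum.inl a) := by
            rw [SimpleGraph.mem_neighborFinset]; exact hadj
          rw [hx] at this ⊢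
          rw [Finset.mem_singleton] at this
          rw [this]
        have hv : G.neighborFinset (Sum.inr b) = {Sum.inl a} := by
          have hd1 : (G.neighborFinset (Sum.inr b)).card = 1 := by
            rw [SimpleGraph.card_neighborFinset_eq_degree, hdegb1]
          obtain ⟨x, hx⟩ := Finset.card_eq_one.mp hd1
          have : Sum.inl a ∈ G.neighborFinset (Sum.inr b) := by
            rw [SimpleGraph.mem_neighborFinset]; exact hadj.symm
          rw [hx] at this ⊢
          rw [Finset.mem_singleton] at this
          rw [this]
        exact pendant_pair G hconn hcard3 (Sum.inl a) (Sum.inr b) hu hv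
      rw [hda]
      push_cast
      set x := (k a : ℝ) with hx
      set y := (m a : ℝ) with hy
      have hx1 : 1 ≤ x := by rw [hx]; exact_mod_cast Nat.one_le_iff_ne_zero.mpr hK
      have hy0 : 0 ≤ y := by rw [hy]; positivity
      have hxy : 2 ≤ x + y := by
        rw [hx, hy]
        exact_mod_cast hge2
      rw [one_div, inv_mul_eq_div, div_le_iff₀ (by linarith)]
      nlinarith [mul_nonneg (by linarith : (0:ℝ) ≤ x) (by linarith : (0:ℝ) ≤ x + y - 2)]
  -- the A-side sum
  have hSa : ∀ a : A, (R * R) (Sum.inl a) (Sum.inl a)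
      = (1 / (G.degree (Sum.inl a) : ℝ)) * ((k a : ℝ) + (m a : ℝ) / 2) := by
    intro a
    rw [hdiag (Sum.inl a), Fintype.sum_sum_type]
    have h0 : (∑ a' : A, if G.Adj (Sum.inl a) (Sum.inl a') then
        (1:ℝ) / ((G.degree (Sum.inl a) : ℝ) * (G.degree (Sum.inl a') : ℝ)) else 0) = 0 := by
      apply Finset.sum_eq_zero
      intro a' _
      rw [if_neg (hA a a')]
    rw [h0, zero_add, hval a]
  -- counting: sum of k = number of degree-1 B vertices
  set B1 : Finset B := Finset.univ.filter (fun b => G.degree (Sum.inr b) = 1) with hB1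
  set B2 : Finset B := Finset.univ.filter (fun b => G.degree (Sum.inr b) = 2) with hB2
  have hsumk : (∑ a, k a) = B1.card := by
    have hstep : ∀ a, k a = ∑ b : B,
        if G.Adj (Sum.inl a) (Sum.inr b) ∧ G.degree (Sum.inr b) = 1 then 1 else 0 := by
      intro a
      rw [hk]
      dsimp only
      rw [hNa, Finset.filter_filter, Finset.card_filter]
    rw [Finset.sum_congr rfl (fun a _ => hstep a), Finset.sum_comm]
    rw [hB1, Finset.card_filter]
    apply Finset.sum_congr rfl
    intro b _
    by_cases hP : G.degree (Sum.inr b) = 1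
    · rw [if_pos hP]
      have h1 : (∑ a : A, if G.Adj (Sum.inl a) (Sum.inr b) ∧ G.degree (Sum.inr b) = 1
          then 1 else 0) = ∑ a : A, if G.Adj (Sum.inl a) (Sum.inr b) then 1 else 0 :=
        Finset.sum_congr rfl (fun a _ => by simp [hP])
      have h2 : (∑ a : A, if G.Adj (Sum.inl a) (Sum.inr b) then 1 else 0) = (Nb b).card := by
        rw [hNb, Finset.card_filter]
        apply Finset.sum_congr rfl
        intro a _
        by_cases h : G.Adj (Sum.inl a) (Sum.inr b)
        · simp [h, h.symm]
        · have hh2 : ¬ G.Adj (Sum.inr b) (Sum.inl a) := fun hh => h hh.symm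
          simp [h, hh2]
      rw [h1, h2, ← hdegB' b]
      exact hP
    · simp [hP]
  -- cardinality bookkeeping
  have hb12 : B1.card + B2.card = Fintype.card B := by
    have hfil : Finset.univ.filter (fun b => ¬ G.degree (Sum.inr b) = 1) = B2 := by
      rw [hB2]
      apply Finset.filter_congr
      intro b _
      rcases hdegB b with h | h <;> simp [h]
    rw [hB1, ← hfil, Finset.card_filter_add_card_filter_not, Finset.card_univ]
  have hedges : Fintype.card (A ⊕ B) ≤ G.edgeFinset.card + 1 := conn_card_le_edges G hconn
  have hsumdeg : ∑ v : A ⊕ B, G.degree v = 2 * G.edgeFinset.card :=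
    SimpleGraph.sum_degrees_eq_twice_card_edges G
  have hsplit : ∑ v : A ⊕ B, G.degree v
      = ∑ a, G.degree (Sum.inl a) + ∑ b, G.degree (Sum.inr b) :=
    Fintype.sum_sum_type _
  have hABsum : ∑ a, G.degree (Sum.inl a) = ∑ b, G.degree (Sum.inr b) := by
    have h1 : ∀ a, G.degree (Sum.inl a)
        = ∑ b : B, if G.Adj (Sum.inl a) (Sum.inr b) then 1 else 0 := by
      intro a
      rw [hdegA a, hNa, Finset.card_filter]
    have h2 : ∀ b, G.degree (Sum.inr b)
        = ∑ a : A, if G.Adj (Sum.inl a) (Sum.inr b) then 1 else 0 := by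
      intro b
      rw [hdegB' b, hNb, Finset.card_filter]
      apply Finset.sum_congr rfl
      intro a _
      by_cases h : G.Adj (Sum.inl a) (Sum.inr b)
      · simp [h, h.symm]
      · have hh : ¬ G.Adj (Sum.inr b) (Sum.inl a) := fun hh => h hh.symm
        simp [h, hh]
    rw [Finset.sum_congr rfl (fun a _ => h1 a), Finset.sum_congr rfl (fun b _ => h2 b),
      Finset.sum_comm]
  have hdegsumB : ∑ b, G.degree (Sum.inr b) = B1.card + 2 * B2.card := by
    rw [← Finset.sum_filter_add_sum_filter_not Finset.univ
      (fun b => G.degree (Sum.inr b) = 1)]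
    have hfil : Finset.univ.filter (fun b => ¬ G.degree (Sum.inr b) = 1) = B2 := by
      rw [hB2]
      apply Finset.filter_congr
      intro b _
      rcases hdegB b with h | h <;> simp [h]
    rw [hfil]
    congr 1
    · rw [← hB1, Finset.sum_congr rfl (fun b hb => ?_), Finset.sum_const, smul_eq_mul,
        mul_one]
      rw [hB1, Finset.mem_filter] at hb
      exact hb.2
    · rw [Finset.sum_congr rfl (fun b hb => ?_), Finset.sum_const, smul_eq_mul, mul_comm]
      rw [hB2, Finset.mem_filter] at hb
      exact hb.2
  have hkey : 2 * Fintype.card A + B1.card ≤ n + 1 := by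
    have hcs : Fintype.card (A ⊕ B) = Fintype.card A + Fintype.card B := Fintype.card_sum
    omega
  -- part 1
  have hpart1 : (∑ a : A, (R * R) (Sum.inl a) (Sum.inl a)) ≤ ((n : ℝ) + 1) / 4 := by
    calc (∑ a : A, (R * R) (Sum.inl a) (Sum.inl a))
        = ∑ a : A, (1 / (G.degree (Sum.inl a) : ℝ)) * ((k a : ℝ) + (m a : ℝ) / 2) :=
          Finset.sum_congr rfl (fun a _ => hSa a)
      _ ≤ ∑ a : A, (1 / 2 + (k a : ℝ) / 4) :=
          Finset.sum_le_sum (fun a _ => hbound a)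
      _ = (Fintype.card A : ℝ) / 2 + (∑ a, (k a : ℝ)) / 4 := by
          rw [Finset.sum_add_distrib, Finset.sum_const, Finset.card_univ, Finset.sum_div]
          simp [nsmul_eq_mul]
          ring
      _ = (Fintype.card A : ℝ) / 2 + (B1.card : ℝ) / 4 := by
          rw [← Nat.cast_sum, hsumk]
      _ = ((2 * Fintype.card A + B1.card : ℕ) : ℝ) / 4 := by
          push_cast
          ring
      _ ≤ ((n : ℝ) + 1) / 4 := by
          have hcast : ((2 * Fintype.card A + B1.card : ℕ) : ℝ) ≤ (n : ℝ) + 1 := by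
            exact_mod_cast hkey
          linarith
  refine ⟨hpart1, ?_⟩
  -- part 2: trace
  have htr : (R * R).trace = 2 * ∑ a : A, (R * R) (Sum.inl a) (Sum.inl a) := by
    rw [Matrix.trace]
    have : ∑ v : A ⊕ B, (R * R).diag v
        = ∑ a, (R * R) (Sum.inl a) (Sum.inl a) + ∑ b, (R * R) (Sum.inr b) (Sum.inr b) :=
      Fintype.sum_sum_type _
    rw [this]
    have hBsum : ∑ b, (R * R) (Sum.inr b) (Sum.inr b)
        = ∑ a, (R * R) (Sum.inl a) (Sum.inl a) := by
      have hb' : ∀ b : B, (R * R) (Sum.inr b) (Sum.inr b)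
          = ∑ a : A, (if G.Adj (Sum.inl a) (Sum.inr b) then
              (1:ℝ) / ((G.degree (Sum.inl a) : ℝ) * (G.degree (Sum.inr b) : ℝ)) else 0) := by
        intro b
        rw [hdiag (Sum.inr b), Fintype.sum_sum_type]
        have h0 : (∑ b' : B, if G.Adj (Sum.inr b) (Sum.inr b') then
            (1:ℝ) / ((G.degree (Sum.inr b) : ℝ) * (G.degree (Sum.inr b') : ℝ)) else 0) = 0 := by
          apply Finset.sum_eq_zero
          intro b' _
          rw [if_neg (hB b b')]
        rw [h0, add_zero]
        apply Finset.sum_congr rfl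
        intro a _
        by_cases h : G.Adj (Sum.inl a) (Sum.inr b)
        · rw [if_pos h.symm, if_pos h, mul_comm ((G.degree (Sum.inr b) : ℝ)) _]
        · rw [if_neg (fun hh => h hh.symm), if_neg h]
      have ha' : ∀ a : A, (R * R) (Sum.inl a) (Sum.inl a)
          = ∑ b : B, (if G.Adj (Sum.inl a) (Sum.inr b) then
              (1:ℝ) / ((G.degree (Sum.inl a) : ℝ) * (G.degree (Sum.inr b) : ℝ)) else 0) := by
        intro a
        rw [hdiag (Sum.inl a), Fintype.sum_sum_type]
        have h0 : (∑ a' : A, if G.Adj (Sum.inl a) (Sum.inl a') then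
            (1:ℝ) / ((G.degree (Sum.inl a) : ℝ) * (G.degree (Sum.inl a') : ℝ)) else 0) = 0 := by
          apply Finset.sum_eq_zero
          intro a' _
          rw [if_neg (hA a a')]
        rw [h0, zero_add]
      rw [Finset.sum_congr rfl (fun b _ => hb' b),
        Finset.sum_congr rfl (fun a _ => ha' a), Finset.sum_comm]
    rw [hBsum]
    ring
  rw [htr]
  linarith
end

section
/- Let G be a bipartite graph on n vertices whose Randić matrix R has eigenvalues ±1 and nullity η, and suppose tr(R²) ≤ (n+1)/2. Then RE(G) ≤ √(n−2−η)·√(n−3)·(√2)/2 + 2. -/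
open scoped Classical

lemma trace_mul_self_eq_sum_sq {V : Type*} [Fintype V] [DecidableEq V]
    (A : Matrix V V ℝ) (hA : A.IsHermitian) :
    (A * A).trace = ∑ i, hA.eigenvalues i ^ 2 := by
  set U : Matrix V V ℝ := (Matrix.IsHermitian.eigenvectorUnitary hA : Matrix V V ℝ) with hUdef
  set D : Matrix V V ℝ := Matrix.diagonal (RCLike.ofReal ∘ hA.eigenvalues) with hDdef
  have hspec : A = U * D * star U := hA.spectral_theorem
  have hU : star U * U = 1 :=
    Matrix.mem_unitaryGroup_iff'.mp (Matrix.IsHermitian.eigenvectorUnitary hA).2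
  calc (A * A).trace = (U * D * star U * (U * D * star U)).trace := by rw [← hspec]
    _ = (U * (D * D) * star U).trace := by
        rw [show U * D * star U * (U * D * star U) = U * (D * (star U * U) * D) * star U by
          simp only [Matrix.mul_assoc], hU, Matrix.mul_one]
    _ = (D * D).trace := by
        rw [Matrix.trace_mul_comm, ← Matrix.mul_assoc, hU, Matrix.one_mul]
    _ = ∑ i, hA.eigenvalues i ^ 2 := by
        rw [hDdef, Matrix.diagonal_mul_diagonal, Matrix.trace_diagonal]
        simp [sq]

theorem randic_energy_bound_small_trace {V : Type*} [Fintype V]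
    (G : SimpleGraph V) [DecidableRel G.Adj] (n : ℕ)
    (hn : Fintype.card V = n) (hbip : G.Colorable 2)
    (hR : (randicMatrix G).IsHermitian)
    (h1 : ∃ i, hR.eigenvalues i = 1) (hneg1 : ∃ i, hR.eigenvalues i = -1)
    (η : ℕ) (hη : η = (Finset.univ.filter fun i => hR.eigenvalues i = 0).card)
    (htr : (randicMatrix G * randicMatrix G).trace ≤ ((n : ℝ) + 1) / 2) :
    ∑ i, |hR.eigenvalues i| ≤
      Real.sqrt ((n : ℝ) - 2 - η) * Real.sqrt ((n : ℝ) - 3) * Real.sqrt 2 / 2 + 2 := by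
  classical
  obtain ⟨i₀, hi₀⟩ := h1
  obtain ⟨i₁, hi₁⟩ := hneg1
  have hne : i₀ ≠ i₁ := by intro h; rw [h, hi₁] at hi₀; norm_num at hi₀
  set μ := hR.eigenvalues with hμ
  have htr2 : ∑ i, μ i ^ 2 ≤ ((n : ℝ) + 1) / 2 := by
    rw [← trace_mul_self_eq_sum_sq _ hR]; exact htr
  set Z : Finset V := Finset.univ.filter fun i => μ i = 0 with hZ
  set P : Finset V := ({i₀, i₁} : Finset V) with hP
  have hPcard : P.card = 2 := by
    rw [hP, Finset.card_insert_of_notMem (by simpa using hne), Finset.card_singleton]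
  have hZsub : Z ⊆ Finset.univ \ P := by
    intro i hi
    simp only [hZ, Finset.mem_filter] at hi
    simp only [Finset.mem_sdiff, Finset.mem_univ, true_and, hP, Finset.mem_insert,
      Finset.mem_singleton]
    rintro (rfl | rfl)
    · rw [hi.2] at hi₀; norm_num at hi₀
    · rw [hi.2] at hi₁; norm_num at hi₁
  set T : Finset V := (Finset.univ \ P) \ Z with hT
  have hcardSP : (Finset.univ \ P).card = n - 2 := by
    rw [Finset.card_sdiff_of_subset (Finset.subset_univ _), hPcard, Finset.card_univ, hn]
  have h2n : 2 ≤ n := by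
    have := Finset.card_le_card (Finset.subset_univ P)
    rw [hPcard, Finset.card_univ, hn] at this; exact this
  have hηle : η ≤ n - 2 := by
    rw [hη, ← hcardSP]; exact Finset.card_le_card hZsub
  have hTcard : (T.card : ℝ) = (n : ℝ) - 2 - η := by
    rw [hT, Finset.card_sdiff_of_subset hZsub, hcardSP, ← hη,
      Nat.cast_sub hηle, Nat.cast_sub h2n]
    norm_num
  -- split sums
  have hsplit : ∀ f : V → ℝ, ∑ i, f i = ∑ i ∈ Finset.univ \ P, f i + ∑ i ∈ P, f i :=
    fun f => (Finset.sum_sdiff (Finset.subset_univ P)).symm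
  have hsplit2 : ∀ f : V → ℝ, ∑ i ∈ Finset.univ \ P, f i = ∑ i ∈ T, f i + ∑ i ∈ Z, f i :=
    fun f => (Finset.sum_sdiff hZsub).symm
  have hPabs : ∑ i ∈ P, |μ i| = 2 := by
    rw [hP, Finset.sum_insert (by simpa using hne), Finset.sum_singleton, hi₀, hi₁]
    norm_num
  have hPsq : ∑ i ∈ P, μ i ^ 2 = 2 := by
    rw [hP, Finset.sum_insert (by simpa using hne), Finset.sum_singleton, hi₀, hi₁]
    norm_num
  have hZmem : ∀ i ∈ Z, μ i = 0 := by
    intro i hi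
    simp only [hZ, Finset.mem_filter] at hi
    exact hi.2
  have hZabs : ∑ i ∈ Z, |μ i| = 0 :=
    Finset.sum_eq_zero fun i hi => by rw [hZmem i hi]; simp
  have hZsq : ∑ i ∈ Z, μ i ^ 2 = 0 :=
    Finset.sum_eq_zero fun i hi => by rw [hZmem i hi]; simp
  -- bound on sum of squares over T
  have hTsq : ∑ i ∈ T, μ i ^ 2 ≤ ((n : ℝ) - 3) / 2 := by
    have := htr2
    rw [hsplit (fun i => μ i ^ 2), hsplit2 (fun i => μ i ^ 2), hPsq, hZsq] at this
    linarith
  have hTsqnn : 0 ≤ ∑ i ∈ T, μ i ^ 2 := Finset.sum_nonneg fun i _ => sq_nonneg _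
  have hn3 : (0 : ℝ) ≤ (n : ℝ) - 3 := by linarith
  have hTnn : (0 : ℝ) ≤ (n : ℝ) - 2 - η := by rw [← hTcard]; positivity
  -- Cauchy-Schwarz
  have hCS : (∑ i ∈ T, |μ i|) ^ 2 ≤ (T.card : ℝ) * ∑ i ∈ T, μ i ^ 2 := by
    have := sq_sum_le_card_mul_sum_sq (s := T) (f := fun i => |μ i|)
    simpa [sq_abs] using this
  have hTabs : ∑ i ∈ T, |μ i| ≤
      Real.sqrt ((n : ℝ) - 2 - η) * Real.sqrt ((n : ℝ) - 3) * Real.sqrt 2 / 2 := by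
    have h1' : ∑ i ∈ T, |μ i| ≤ Real.sqrt ((T.card : ℝ) * ∑ i ∈ T, μ i ^ 2) := by
      have hnn : 0 ≤ ∑ i ∈ T, |μ i| := Finset.sum_nonneg fun i _ => abs_nonneg _
      calc ∑ i ∈ T, |μ i| = Real.sqrt ((∑ i ∈ T, |μ i|) ^ 2) := (Real.sqrt_sq hnn).symm
        _ ≤ Real.sqrt ((T.card : ℝ) * ∑ i ∈ T, μ i ^ 2) := Real.sqrt_le_sqrt hCS
    have h2' : Real.sqrt ((T.card : ℝ) * ∑ i ∈ T, μ i ^ 2) ≤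
        Real.sqrt (((n : ℝ) - 2 - η) * (((n : ℝ) - 3) / 2)) := by
      apply Real.sqrt_le_sqrt
      rw [hTcard]
      exact mul_le_mul_of_nonneg_left hTsq hTnn
    have hs2 : Real.sqrt 2 * Real.sqrt 2 = 2 := Real.mul_self_sqrt (by norm_num)
    have h2pos : (0:ℝ) < Real.sqrt 2 := Real.sqrt_pos.mpr (by norm_num)
    have hhalf : Real.sqrt ((1:ℝ)/2) = Real.sqrt 2 / 2 := by
      rw [show (1:ℝ)/2 = 1 * (1/2) by ring]
      rw [show ((1:ℝ) * (1/2)) = (1/2 : ℝ) by ring]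
      rw [show (1/2 : ℝ) = 2⁻¹ by norm_num, Real.sqrt_inv]
      rw [inv_eq_one_div, div_eq_div_iff h2pos.ne' (by norm_num : (2:ℝ) ≠ 0)]
      linarith [hs2]
    have heq : Real.sqrt (((n : ℝ) - 2 - η) * (((n : ℝ) - 3) / 2)) =
        Real.sqrt ((n : ℝ) - 2 - η) * Real.sqrt ((n : ℝ) - 3) * Real.sqrt 2 / 2 := by
      rw [Real.sqrt_mul hTnn, show ((n:ℝ) - 3)/2 = ((n:ℝ)-3) * (1/2) by ring,
        Real.sqrt_mul hn3, hhalf]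
      ring
    linarith [heq ▸ le_trans h1' h2']
  calc ∑ i, |μ i| = ∑ i ∈ T, |μ i| + 2 := by
        rw [hsplit (fun i => |μ i|), hsplit2 (fun i => |μ i|), hPabs, hZabs]; ring
    _ ≤ Real.sqrt ((n : ℝ) - 2 - η) * Real.sqrt ((n : ℝ) - 3) * Real.sqrt 2 / 2 + 2 := by
        linarith
end
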